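/- arXiv:2304.12838 — 3 statements merged into one kernel-verified Lean document; each statement's English description precedes it below -/
import Mathlib

section
/- For λ > 0, the limit as r → 1⁻ of I_λ(r) = (1/2π) ∫₀^{2π} (1-r²)^λ / |1 - r e^{-iθ}|^{λ+1} dθ equals Γ(λ)/Γ(λ/2 + 1/2)². -/
noncomputable section

open Complex MeasureTheory intervalIntegral Real Filter

/-- Wirtinger derivative ∂_z = (∂_x − i∂_y)/2. -/
def wdz (u : ℂ → ℂ) (z : ℂ) : ℂ :=
  (fderiv ℝ u z 1 - Complex.I * fderiv ℝ u z Complex.I) / 2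

/-- Wirtinger derivative ∂_z̄ = (∂_x + i∂_y)/2. -/
def wdzbar (u : ℂ → ℂ) (z : ℂ) : ℂ :=
  (fderiv ℝ u z 1 + Complex.I * fderiv ℝ u z Complex.I) / 2

/-- The kernel K_{α,β}(z) = (1-|z|²)^{α+β+1} / ((1-z)^{α+1}(1-z̄)^{β+1}). -/
def Kab (a b : ℝ) (z : ℂ) : ℂ :=
  ((1 - ‖z‖ ^ 2 : ℂ) ^ ((a + b + 1 : ℝ) : ℂ)) /
    ((1 - z) ^ ((a + 1 : ℝ) : ℂ) * (1 - (starRingEnd ℂ) z) ^ ((b + 1 : ℝ) : ℂ))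

/-- The constant c_{α,β} = Γ(α+1)Γ(β+1)/Γ(α+β+1). -/
def cab (a b : ℝ) : ℝ := Real.Gamma (a + 1) * Real.Gamma (b + 1) / Real.Gamma (a + b + 1)

/-- The kernel integral K_{a,b}[f](z) = (1/2π)∫₀^{2π} K_{a,b}(z e^{-it}) f(e^{it}) dt. -/
def Kint (a b : ℝ) (f : ℝ → ℂ) (z : ℂ) : ℂ :=
  ((1 / (2 * π) : ℝ) : ℂ) *
    ∫ t in (0:ℝ)..(2 * π), Kab a b (z * Complex.exp (-(t : ℂ) * Complex.I)) * f t

/-- The (α,β)-harmonic Poisson integral P_{α,β}[f] = c_{α,β} K_{α,β}[f]. -/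
def Pab (a b : ℝ) (f : ℝ → ℂ) (z : ℂ) : ℂ := (cab a b : ℂ) * Kint a b f z

/-- I_λ(r) = (1/2π)∫₀^{2π} (1-r²)^λ / |1-re^{-iθ}|^{λ+1} dθ. -/
def Ilam (lam r : ℝ) : ℝ :=
  (1 / (2 * π)) * ∫ θ in (0:ℝ)..(2 * π),
    (1 - r ^ 2) ^ lam / ‖1 - (r : ℂ) * Complex.exp (-(θ : ℂ) * Complex.I)‖ ^ (lam + 1)

/-- Integral mean M_p(r,v). -/
def Mp (p r : ℝ) (v : ℂ → ℂ) : ℝ :=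
  ((1 / (2 * π)) * ∫ θ in (0:ℝ)..(2 * π),
      ‖v ((r : ℂ) * Complex.exp ((θ : ℂ) * Complex.I))‖ ^ p) ^ (1 / p)

/-- L^p norm on the circle (normalized). -/
def nLp (p : ℝ) (f : ℝ → ℂ) : ℝ :=
  ((1 / (2 * π)) * ∫ θ in (0:ℝ)..(2 * π), ‖f θ‖ ^ p) ^ (1 / p)

/-- Membership in the generalized Hardy space H^p_G(𝔻). -/
def MemHG (p : ℝ) (v : ℂ → ℂ) : Prop :=
  ∃ C : ℝ, ∀ r ∈ Set.Ioo (0:ℝ) 1, Mp p r v ≤ C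

/-- x is not a negative integer. -/
def NotNegInt (x : ℝ) : Prop := ∀ n : ℕ, x ≠ -(n + 1 : ℝ)

/-- f (as a 2π-periodic function of θ, representing a function on 𝕋) is absolutely
continuous with angular derivative fdot ∈ L¹. -/
def CircleAC (f fdot : ℝ → ℂ) : Prop :=
  Function.Periodic f (2 * π) ∧ (∀ θ : ℝ, f θ = f 0 + ∫ t in (0:ℝ)..θ, fdot t) ∧
    IntervalIntegrable fdot MeasureTheory.volume 0 (2 * π)

/-- Pochhammer symbol (x)_n. -/
def ascP (x : ℝ) (n : ℕ) : ℝ := Polynomial.eval x (ascPochhammer ℝ n)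

/-- Gaussian hypergeometric function F(a,b;c;x). -/
def hyperF (a b c x : ℝ) : ℝ :=
  ∑' n : ℕ, ascP a n * ascP b n / (ascP c n * (n.factorial : ℝ)) * x ^ n

open Set Topology

lemma real_beta {u v : ℝ} (hu : 0 < u) (hv : 0 < v) :
    ∫ x in (0:ℝ)..1, x ^ (u-1) * (1-x) ^ (v-1) = Real.Gamma u * Real.Gamma v / Real.Gamma (u+v) := by
  have h0 : Real.Gamma (u+v) ≠ 0 := (Real.Gamma_pos_of_pos (by linarith)).ne'
  have hβ : Complex.betaIntegral u v = ((Real.Gamma u * Real.Gamma v / Real.Gamma (u+v) : ℝ) : ℂ) := by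
    have := Complex.Gamma_mul_Gamma_eq_betaIntegral (s := (u:ℂ)) (t := (v:ℂ))
      (by simpa using hu) (by simpa using hv)
    rw [← Complex.ofReal_add, Complex.Gamma_ofReal, Complex.Gamma_ofReal, Complex.Gamma_ofReal] at this
    push_cast
    rw [eq_div_iff (by exact_mod_cast h0)]
    rw [this]; ring
  have hcong : Complex.betaIntegral u v
      = ∫ x in (0:ℝ)..1, ((x ^ (u-1) * (1-x) ^ (v-1) : ℝ) : ℂ) := by
    unfold Complex.betaIntegral
    refine intervalIntegral.integral_congr fun x hx => ?_
    rw [Set.uIcc_of_le zero_le_one] at hx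
    rw [Complex.ofReal_mul, Complex.ofReal_cpow hx.1, Complex.ofReal_cpow (by linarith [hx.2] : (0:ℝ) ≤ 1 - x)]
    push_cast; ring
  rw [hcong, intervalIntegral.integral_ofReal] at hβ
  exact_mod_cast hβ


lemma J_val {lam : ℝ} (hlam : 0 < lam) :
    ∫ t in Set.Ioi (0:ℝ), (1+t^2) ^ (-((lam+1)/2))
      = Real.sqrt π * Real.Gamma (lam/2) / (2 * Real.Gamma ((lam+1)/2)) := by
  set s : ℝ := (lam+1)/2 with hs
  set f : ℝ → ℝ := fun x => Real.sqrt (x/(1-x)) with hf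
  set g : ℝ → ℝ := fun x => 1/(2*Real.sqrt (x/(1-x)) * (1-x)^2) with hg
  have hderiv : ∀ x ∈ Ioo (0:ℝ) 1, HasDerivAt f (g x) x := by
    intro x hx
    have hx1 : (0:ℝ) < 1 - x := by linarith [hx.2]
    have hq : 0 < x/(1-x) := div_pos hx.1 hx1
    have h1 : HasDerivAt (fun y : ℝ => y/(1-y)) ((1*(1-x) - x*(0-1))/(1-x)^2) x :=
      HasDerivAt.div (hasDerivAt_id x) ((hasDerivAt_const x (1:ℝ)).sub (hasDerivAt_id x)) hx1.ne'
    have h2 := (Real.hasDerivAt_sqrt hq.ne').comp x h1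
    refine h2.congr_deriv ?_
    rw [hg]
    have hsq : Real.sqrt (x/(1-x)) ≠ 0 := (Real.sqrt_pos.mpr hq).ne'
    field_simp
    ring
  have himage : f '' Ioo 0 1 = Ioi 0 := by
    ext t
    constructor
    · rintro ⟨x, hx, rfl⟩
      exact Real.sqrt_pos.mpr (div_pos hx.1 (by linarith [hx.2]))
    · intro ht
      have ht' : (0:ℝ) < t := ht
      have h1t : (0:ℝ) < 1 + t^2 := by positivity
      refine ⟨t^2/(1+t^2), ⟨by positivity, by rw [div_lt_one h1t]; linarith⟩, ?_⟩
      have hxx : t^2/(1+t^2) / (1 - t^2/(1+t^2)) = t^2 := by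
        field_simp
        ring
      rw [hf]; simp only [hxx]
      exact Real.sqrt_sq ht'.le
  have hinj : InjOn f (Ioo 0 1) := by
    intro x hx y hy h
    have hx1 : (0:ℝ) < 1 - x := by linarith [hx.2]
    have hy1 : (0:ℝ) < 1 - y := by linarith [hy.2]
    have hqx : 0 ≤ x/(1-x) := le_of_lt (div_pos hx.1 hx1)
    have hqy : 0 ≤ y/(1-y) := le_of_lt (div_pos hy.1 hy1)
    have h2 := (Real.sqrt_inj hqx hqy).mp h
    field_simp at h2
    nlinarith [h2]
  have key : ∫ t in Set.Ioi (0:ℝ), (1+t^2) ^ (-s)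
      = ∫ x in Ioo (0:ℝ) 1, (1/2) * (x ^ ((1:ℝ)/2 - 1) * (1-x) ^ (lam/2 - 1)) := by
    rw [← himage, MeasureTheory.integral_image_eq_integral_abs_deriv_smul measurableSet_Ioo
      (fun x hx => (hderiv x hx).hasDerivWithinAt) hinj]
    refine MeasureTheory.setIntegral_congr_fun measurableSet_Ioo fun x hx => ?_
    have hx1 : (0:ℝ) < 1 - x := by linarith [hx.2]
    have hq : 0 < x/(1-x) := div_pos hx.1 hx1
    have hsqp : 0 < Real.sqrt (x/(1-x)) := Real.sqrt_pos.mpr hq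
    have hgp : 0 < g x := by
      rw [hg]; positivity
    have hsq : f x ^ 2 = x/(1-x) := Real.sq_sqrt hq.le
    have hbase : 1 + f x ^ 2 = (1-x)⁻¹ := by rw [hsq]; field_simp; ring
    have hpow : (1 + f x ^ 2) ^ (-s) = (1-x) ^ s := by
      rw [hbase, ← Real.rpow_neg_one (1-x), ← Real.rpow_mul hx1.le]
      norm_num
    rw [smul_eq_mul, abs_of_pos hgp, hpow, hg]
    show 1 / (2 * Real.sqrt (x / (1 - x)) * (1 - x) ^ 2) * (1 - x) ^ s
      = 1 / 2 * (x ^ ((1:ℝ) / 2 - 1) * (1 - x) ^ (lam / 2 - 1))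
    have hxp2 : (0:ℝ) < x ^ ((1:ℝ)/2) := Real.rpow_pos_of_pos hx.1 _
    have hx1p2 : (0:ℝ) < (1-x) ^ ((1:ℝ)/2) := Real.rpow_pos_of_pos hx1 _
    rw [Real.sqrt_eq_rpow, Real.div_rpow hx.1.le hx1.le]
    rw [show (1:ℝ)/(2 * (x ^ ((1:ℝ)/2) / (1-x) ^ ((1:ℝ)/2)) * (1-x)^2) * (1-x)^s
        = 1/2 * ((x ^ ((1:ℝ)/2))⁻¹ * ((1-x) ^ ((1:ℝ)/2) * (((1-x)^2)⁻¹ * (1-x)^s))) by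
      field_simp]
    congr 1
    rw [show (1:ℝ)/2 - 1 = -(1/2) by norm_num, Real.rpow_neg hx.1.le]
    congr 1
    rw [← Real.rpow_natCast (1-x) 2, ← Real.rpow_neg hx1.le, ← Real.rpow_add hx1,
      ← Real.rpow_add hx1]
    congr 1
    push_cast
    rw [hs]
    ring
  rw [key]
  rw [MeasureTheory.integral_const_mul, ← MeasureTheory.integral_Ioc_eq_integral_Ioo,
    ← intervalIntegral.integral_of_le zero_le_one]
  rw [show lam/2 - 1 = lam/2 - 1 from rfl]
  have hb := real_beta (u := (1:ℝ)/2) (v := lam/2) (by norm_num) (by linarith)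
  rw [hb, Real.Gamma_one_half_eq]
  rw [show (1:ℝ)/2 + lam/2 = (lam+1)/2 by ring]
  ring

lemma abs_id (r θ : ℝ) :
    ‖1 - (r:ℂ) * Complex.exp (-(θ:ℂ) * Complex.I)‖
      = Real.sqrt ((1-r)^2 + 4*r*Real.sin (θ/2)^2) := by
  have hz : -(θ:ℂ) * Complex.I = ((-θ : ℝ) : ℂ) * Complex.I := by push_cast; ring
  rw [Complex.norm_def, Complex.normSq_apply]
  congr 1
  have hex : Complex.exp (-(θ:ℂ) * Complex.I)
      = Complex.ofReal (Real.cos θ) - Complex.ofReal (Real.sin θ) * Complex.I := by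
    rw [hz]
    apply Complex.ext
    · simp [Complex.exp_re, Real.cos_neg, Complex.cos_ofReal_re]
    · simp [Complex.exp_im, Real.sin_neg, Complex.sin_ofReal_re]
  have hre : (1 - (r:ℂ) * Complex.exp (-(θ:ℂ) * Complex.I)).re = 1 - r * Real.cos θ := by
    rw [hex]; simp [Complex.cos_ofReal_re, Complex.sin_ofReal_re]
  have him : (1 - (r:ℂ) * Complex.exp (-(θ:ℂ) * Complex.I)).im = r * Real.sin θ := by
    rw [hex]; simp [Complex.cos_ofReal_re, Complex.sin_ofReal_re]
  rw [hre, him]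
  have hhalf : Real.sin (θ/2) ^ 2 = 1/2 - Real.cos θ / 2 := by
    rw [Real.sin_sq_eq_half_sub]
    ring_nf
  linear_combination (r^2) * Real.sin_sq_add_cos_sq θ - 4*r*hhalf

lemma Dpos {r : ℝ} (hr : r ∈ Ioo (0:ℝ) 1) (x : ℝ) :
    0 < (1-r)^2 + 4*r*Real.sin x ^2 := by
  have h1 : (0:ℝ) < (1-r)^2 := by nlinarith [hr.2]
  nlinarith [sq_nonneg (Real.sin x), hr.1]

lemma phi_cont {lam r : ℝ} (hr : r ∈ Ioo (0:ℝ) 1) :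
    Continuous (fun θ : ℝ => (1 - r^2) ^ lam * ((1-r)^2 + 4*r*Real.sin (θ/2)^2) ^ (-((lam+1)/2))) := by
  apply Continuous.mul continuous_const
  apply Continuous.rpow_const
  · fun_prop
  · intro θ; exact Or.inl (Dpos hr _).ne'


lemma step_A {lam r : ℝ} (hr : r ∈ Ioo (0:ℝ) 1) :
    Ilam lam r = (1/π) * ∫ t in Ioi (0:ℝ),
      (Ioc (0:ℝ) (π/(1-r))).indicator
        (fun t => (1-r) * ((1 - r^2) ^ lam
          * ((1-r)^2 + 4*r*Real.sin ((1-r)*t/2)^2) ^ (-((lam+1)/2)))) t := by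
  set φ : ℝ → ℝ := fun θ => (1 - r^2) ^ lam * ((1-r)^2 + 4*r*Real.sin (θ/2)^2) ^ (-((lam+1)/2)) with hφ
  have hε : 0 < 1 - r := by linarith [hr.2]
  have hc : Continuous φ := phi_cont hr
  have hint : ∀ θ:ℝ, (1 - r^2)^lam
      / ‖1 - (r:ℂ) * Complex.exp (-(θ:ℂ) * Complex.I)‖ ^ (lam+1) = φ θ := by
    intro θ
    rw [abs_id, Real.sqrt_eq_rpow, ← Real.rpow_mul (Dpos hr (θ/2)).le, div_eq_mul_inv,
      ← Real.rpow_neg (Dpos hr (θ/2)).le]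
    rw [hφ]
    simp only
    congr 2
    ring
  have e1 : ∫ x in (0:ℝ)..π, φ (2*π - x) = ∫ x in π..(2*π), φ x := by
    rw [intervalIntegral.integral_comp_sub_left φ (2*π)]
    congr 1 <;> ring
  have e2 : ∫ x in (0:ℝ)..π, φ (2*π - x) = ∫ x in (0:ℝ)..π, φ x := by
    refine intervalIntegral.integral_congr fun x _ => ?_
    rw [hφ]
    simp only
    rw [show (2*π - x)/2 = π - x/2 by ring, Real.sin_pi_sub]
  have fold : ∫ θ in (0:ℝ)..(2*π), φ θ = 2 * ∫ θ in (0:ℝ)..π, φ θ := by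
    rw [← intervalIntegral.integral_add_adjacent_intervals
      (hc.intervalIntegrable 0 π) (hc.intervalIntegrable π (2*π)), ← e1, e2]
    ring
  have sub : ∫ t in (0:ℝ)..(π/(1-r)), φ ((1-r)*t) = (1-r)⁻¹ * ∫ θ in (0:ℝ)..π, φ θ := by
    rw [intervalIntegral.integral_comp_mul_left φ hε.ne', mul_zero,
      mul_div_cancel₀ _ hε.ne', smul_eq_mul]
  have hind : ∫ t in Ioi (0:ℝ), (Ioc (0:ℝ) (π/(1-r))).indicator
        (fun t => (1-r) * φ ((1-r)*t)) t
      = (1-r) * ∫ t in (0:ℝ)..(π/(1-r)), φ ((1-r)*t) := by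
    rw [MeasureTheory.integral_indicator measurableSet_Ioc,
      Measure.restrict_restrict measurableSet_Ioc,
      inter_eq_self_of_subset_left Ioc_subset_Ioi_self,
      intervalIntegral.integral_of_le (by positivity : (0:ℝ) ≤ π/(1-r)),
      MeasureTheory.integral_const_mul]
  have lhs_eq : Ilam lam r = (1/(2*π)) * (2 * ∫ θ in (0:ℝ)..π, φ θ) := by
    unfold Ilam
    rw [intervalIntegral.integral_congr (fun θ _ => hint θ), fold]
  rw [lhs_eq, hind, sub]
  have hπ : (π:ℝ) ≠ 0 := Real.pi_ne_zero
  field_simp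

lemma sin_div_lim : Tendsto (fun x : ℝ => Real.sin x / x) (nhdsWithin 0 {(0:ℝ)}ᶜ) (nhds 1) := by
  have h := hasDerivAt_iff_tendsto_slope.mp (Real.hasDerivAt_sin 0)
  simp only [Real.cos_zero] at h
  refine h.congr fun x => ?_
  simp [slope_def_field, Real.sin_zero]

lemma eps_lim : Tendsto (fun r : ℝ => 1 - r) (nhdsWithin 1 (Iio 1)) (nhdsWithin 0 (Ioi 0)) := by
  rw [tendsto_nhdsWithin_iff]
  constructor
  · have : Tendsto (fun r : ℝ => 1 - r) (nhds 1) (nhds 0) := by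
      have h2 : Continuous (fun r : ℝ => 1 - r) := by fun_prop
      simpa using h2.tendsto 1
    exact this.mono_left nhdsWithin_le_nhds
  · filter_upwards [self_mem_nhdsWithin] with r (hr : r < 1)
    simpa using hr

set_option maxHeartbeats 1000000 in
lemma step_B {lam : ℝ} (hlam : 0 < lam) :
    Tendsto (fun r : ℝ => ∫ t in Ioi (0:ℝ),
      (Ioc (0:ℝ) (π/(1-r))).indicator
        (fun t => (1-r) * ((1 - r^2) ^ lam
          * ((1-r)^2 + 4*r*Real.sin ((1-r)*t/2)^2) ^ (-((lam+1)/2)))) t)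
      (nhdsWithin 1 (Iio 1))
      (nhds (∫ t in Ioi (0:ℝ), (2:ℝ)^lam * (1+t^2) ^ (-((lam+1)/2)))) := by
  set l := nhdsWithin (1:ℝ) (Iio 1) with hl
  set F : ℝ → ℝ → ℝ := fun r => (Ioc (0:ℝ) (π/(1-r))).indicator
        (fun t => (1-r) * ((1 - r^2) ^ lam
          * ((1-r)^2 + 4*r*Real.sin ((1-r)*t/2)^2) ^ (-((lam+1)/2)))) with hF
  set bound : ℝ → ℝ := fun t =>
    (2:ℝ)^lam * ((2/π^2) ^ (-((lam+1)/2)) * (1+t^2) ^ (-((lam+1)/2))) with hbd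
  have hIoo : Ioo (1/2 : ℝ) 1 ∈ l := Ioo_mem_nhdsLT_of_mem (by norm_num)
  have hπ2 : (0:ℝ) < 2/π^2 := by positivity
  have hππ : (2:ℝ) < π^2 := by nlinarith [Real.pi_gt_three]
  -- measurability
  have hmeas : ∀ᶠ r in l, AEStronglyMeasurable (F r) (volume.restrict (Ioi 0)) := by
    filter_upwards [hIoo] with r hr
    have hεp : (0:ℝ) < 1 - r := by linarith [hr.2]
    have hr0 : (0:ℝ) < r := by linarith [hr.1]
    have hcont : Continuous (fun t : ℝ => (1-r) * ((1 - r^2) ^ lam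
        * ((1-r)^2 + 4*r*Real.sin ((1-r)*t/2)^2) ^ (-((lam+1)/2)))) := by
      apply Continuous.mul continuous_const
      apply Continuous.mul continuous_const
      apply Continuous.rpow_const
      · fun_prop
      · intro t
        left
        have : (0:ℝ) < (1-r)^2 + 4*r*Real.sin ((1-r)*t/2)^2 := by
          nlinarith [sq_nonneg (Real.sin ((1-r)*t/2)), sq_nonneg (1-r)]
        exact this.ne'
    exact ((hcont.measurable).indicator measurableSet_Ioc).aestronglyMeasurable
  -- domination
  have hbound : ∀ᶠ r in l, ∀ᵐ t ∂(volume.restrict (Ioi 0)), ‖F r t‖ ≤ bound t := by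
    filter_upwards [hIoo] with r hr
    have hεp : (0:ℝ) < 1 - r := by linarith [hr.2]
    have hr0 : (0:ℝ) < r := by linarith [hr.1]
    refine MeasureTheory.ae_of_all _ fun t => ?_
    have hbd0 : 0 ≤ bound t := by rw [hbd]; positivity
    by_cases ht : t ∈ Ioc (0:ℝ) (π/(1-r))
    · rw [hF]
      simp only [indicator_of_mem ht]
      have htp : 0 < t := ht.1
      have hεt : (1-r) * t ≤ π := by
        have h := ht.2
        rw [le_div_iff₀ hεp] at h
        linarith
      have h1r2 : (0:ℝ) ≤ 1 - r^2 := by nlinarith [hr.2]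
      have hval0 : (0:ℝ) ≤ (1-r) * ((1 - r^2) ^ lam
          * ((1-r)^2 + 4*r*Real.sin ((1-r)*t/2)^2) ^ (-((lam+1)/2))) :=
        mul_nonneg hεp.le (mul_nonneg (Real.rpow_nonneg h1r2 _)
          (Real.rpow_nonneg (by positivity) _))
      rw [Real.norm_eq_abs, _root_.abs_of_nonneg hval0]
      have hsin : (1-r)*t/π ≤ Real.sin ((1-r)*t/2) := by
        have h0 : (0:ℝ) ≤ (1-r)*t/2 := by positivity
        have h1 : (1-r)*t/2 ≤ π/2 := by linarith
        have h2 := Real.mul_le_sin h0 h1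
        calc (1-r)*t/π = 2/π * ((1-r)*t/2) := by
              field_simp
        _ ≤ Real.sin ((1-r)*t/2) := h2
      have hsinsq : ((1-r)*t/π)^2 ≤ Real.sin ((1-r)*t/2)^2 := by
        apply pow_le_pow_left₀ (by positivity) hsin
      have hD : (1-r)^2 * ((2/π^2) * (1+t^2)) ≤ (1-r)^2 + 4*r*Real.sin ((1-r)*t/2)^2 := by
        have h2 : ((1-r)*t/π)^2 = (1-r)^2*t^2/π^2 := by
          field_simp
        rw [h2] at hsinsq
        have e1 : (1-r)^2 * (2/π^2) ≤ (1-r)^2 * 1 := by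
          apply mul_le_mul_of_nonneg_left _ (sq_nonneg _)
          rw [div_le_one (by positivity)]
          linarith
        have e2 : 2*((1-r)^2*t^2/π^2) ≤ 4*r*Real.sin ((1-r)*t/2)^2 := by
          calc 2*((1-r)^2*t^2/π^2) ≤ 2*Real.sin ((1-r)*t/2)^2 := by linarith
          _ ≤ 4*r*Real.sin ((1-r)*t/2)^2 :=
            mul_le_mul_of_nonneg_right (by linarith [hr.1] : (2:ℝ) ≤ 4*r) (sq_nonneg _)
        have e3 : (1-r)^2*((2/π^2)*(1+t^2)) = (1-r)^2*(2/π^2) + 2*((1-r)^2*t^2/π^2) := by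
          field_simp
        linarith [e1, e2, e3]
      have hDpos : 0 < (1-r)^2*((2/π^2)*(1+t^2)) := by positivity
      have h3 : ((1-r)^2 + 4*r*Real.sin ((1-r)*t/2)^2) ^ (-((lam+1)/2))
          ≤ ((1-r)^2*((2/π^2)*(1+t^2))) ^ (-((lam+1)/2)) :=
        Real.rpow_le_rpow_of_nonpos hDpos hD (by linarith : -((lam+1)/2) ≤ 0)
      have h4 : ((1-r)^2*((2/π^2)*(1+t^2))) ^ (-((lam+1)/2))
          = (1-r)^(-(lam+1)) * ((2/π^2) ^ (-((lam+1)/2)) * (1+t^2)^(-((lam+1)/2))) := by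
        rw [Real.mul_rpow (sq_nonneg _) (by positivity), Real.mul_rpow hπ2.le (by positivity)]
        congr 1
        rw [← Real.rpow_natCast (1-r) 2, ← Real.rpow_mul hεp.le]
        congr 1
        push_cast
        ring
      have h5 : (1 - r^2) ^ lam ≤ (2*(1-r))^lam := by
        apply Real.rpow_le_rpow (by nlinarith) (by nlinarith) hlam.le
      have h6 : (2*(1-r))^lam = 2^lam * (1-r)^lam := Real.mul_rpow (by norm_num) hεp.le
      have e4 : (1-r) * (1-r)^lam * (1-r)^(-(lam+1)) = 1 := by
        have e5 : (1-r) * (1-r)^lam = (1-r)^(1+lam) := by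
          rw [Real.rpow_add hεp, Real.rpow_one]
        rw [e5, ← Real.rpow_add hεp, show 1+lam + -(lam+1) = 0 by ring, Real.rpow_zero]
      calc (1-r) * ((1 - r^2) ^ lam
            * ((1-r)^2 + 4*r*Real.sin ((1-r)*t/2)^2) ^ (-((lam+1)/2)))
          ≤ (1-r) * ((2*(1-r))^lam * (((1-r)^2*((2/π^2)*(1+t^2))) ^ (-((lam+1)/2)))) := by
            apply mul_le_mul_of_nonneg_left _ hεp.le
            apply mul_le_mul h5 h3 (Real.rpow_nonneg (by positivity) _)
              (Real.rpow_nonneg (by positivity) _)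
        _ = bound t := by
            rw [h4, h6, hbd]
            linear_combination (2^lam * ((2/π^2) ^ (-((lam+1)/2)) * (1+t^2)^(-((lam+1)/2)))) * e4
    · rw [hF]
      simp only [indicator_of_notMem ht, norm_zero]
      exact hbd0
  -- integrability of the bound
  have hbint : Integrable bound (volume.restrict (Ioi 0)) := by
    have base := integrable_rpow_neg_one_add_norm_sq (E := ℝ) (μ := volume) (r := lam+1)
      (by simp; linarith)
    have base' : Integrable (fun t : ℝ => (1+t^2) ^ (-((lam+1)/2))) := by
      have : (fun t : ℝ => (1+t^2) ^ (-((lam+1)/2)))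
          = (fun t : ℝ => (1+‖t‖^2) ^ (-(lam+1)/2)) := by
        funext t
        rw [Real.norm_eq_abs, _root_.sq_abs, neg_div]
      rw [this]
      exact base
    exact (((base'.const_mul ((2/π^2) ^ (-((lam+1)/2)))).const_mul ((2:ℝ)^lam)).restrict).congr
      (by
        refine MeasureTheory.ae_of_all _ fun t => ?_
        rw [hbd])
  -- pointwise limit
  have hlim : ∀ᵐ t ∂(volume.restrict (Ioi 0)), Tendsto (fun r => F r t) l
      (𝓝 ((2:ℝ)^lam * (1+t^2) ^ (-((lam+1)/2)))) := by
    rw [MeasureTheory.ae_restrict_iff' measurableSet_Ioi]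
    refine MeasureTheory.ae_of_all _ fun t ht => ?_
    have htp : (0:ℝ) < t := ht
    have hmax : max (1/2 : ℝ) (1 - π/t) < 1 := by
      apply max_lt (by norm_num)
      have : 0 < π/t := by positivity
      linarith
    have hev : (fun r : ℝ => (1+r)^lam
          * (1 + 4*r*(Real.sin ((1-r)*t/2)/(1-r))^2) ^ (-((lam+1)/2))) =ᶠ[l]
        (fun r => F r t) := by
      filter_upwards [Ioo_mem_nhdsLT_of_mem
        (show (1:ℝ) ∈ Ioc (max (1/2) (1 - π/t)) 1 from ⟨hmax, le_refl 1⟩)] with r hr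
      have hr2 : (1/2:ℝ) < r := lt_of_le_of_lt (le_max_left _ _) hr.1
      have hrπ : 1 - π/t < r := lt_of_le_of_lt (le_max_right _ _) hr.1
      have hεp : (0:ℝ) < 1 - r := by linarith [hr.2]
      have hr0 : (0:ℝ) < r := by linarith
      have htm : t ∈ Ioc 0 (π/(1-r)) := by
        refine ⟨htp, ?_⟩
        rw [le_div_iff₀ hεp]
        have h7 : (1-r) < π/t := by linarith
        rw [lt_div_iff₀ htp] at h7
        linarith
      rw [hF]
      simp only [indicator_of_mem htm]
      have hY : (0:ℝ) ≤ 1 + 4*r*(Real.sin ((1-r)*t/2)/(1-r))^2 := by positivity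
      have e1 : (1 - r^2 : ℝ) ^ lam = (1+r)^lam * (1-r)^lam := by
        rw [← Real.mul_rpow (by linarith) hεp.le]
        congr 1
        ring
      have e2 : (1-r)^2 + 4*r*Real.sin ((1-r)*t/2)^2
          = (1-r)^2 * (1 + 4*r*(Real.sin ((1-r)*t/2)/(1-r))^2) := by
        field_simp
      have e3 : ((1-r)^2 * (1 + 4*r*(Real.sin ((1-r)*t/2)/(1-r))^2)) ^ (-((lam+1)/2))
          = (1-r)^(-(lam+1))
            * (1 + 4*r*(Real.sin ((1-r)*t/2)/(1-r))^2) ^ (-((lam+1)/2)) := by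
        rw [Real.mul_rpow (sq_nonneg _) hY]
        congr 1
        rw [← Real.rpow_natCast (1-r) 2, ← Real.rpow_mul hεp.le]
        congr 1
        push_cast
        ring
      have e4 : (1-r) * (1-r)^lam * (1-r)^(-(lam+1)) = 1 := by
        have e5 : (1-r) * (1-r)^lam = (1-r)^(1+lam) := by
          rw [Real.rpow_add hεp, Real.rpow_one]
        rw [e5, ← Real.rpow_add hεp, show 1+lam + -(lam+1) = 0 by ring, Real.rpow_zero]
      rw [e1, e2, e3]
      linear_combination -((1+r)^lam
        * (1 + 4*r*(Real.sin ((1-r)*t/2)/(1-r))^2) ^ (-((lam+1)/2))) * e4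
    have hrlim : Tendsto (fun r : ℝ => r) l (𝓝 1) :=
      tendsto_id.mono_right nhdsWithin_le_nhds
    have hsin : Tendsto (fun r : ℝ => Real.sin ((1-r)*t/2)/((1-r)*t/2)) l (𝓝 1) := by
      apply sin_div_lim.comp
      have h1 : Tendsto (fun r : ℝ => (1-r)*t/2) l (nhdsWithin 0 (Ioi 0)) := by
        rw [tendsto_nhdsWithin_iff]
        constructor
        · have h2 := ((eps_lim.mono_right nhdsWithin_le_nhds).mul_const t).div_const 2
          simpa using h2
        · filter_upwards [self_mem_nhdsWithin] with r (hr : r < 1)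
          have : (0:ℝ) < 1 - r := by linarith
          have : (0:ℝ) < (1-r)*t/2 := by positivity
          exact this
      exact h1.mono_right (nhdsWithin_mono 0 (fun x hx => ne_of_gt hx))
    have hsin2 : Tendsto (fun r : ℝ => Real.sin ((1-r)*t/2)/(1-r)) l (𝓝 (t/2)) := by
      have h2 := hsin.mul_const (t/2)
      rw [one_mul] at h2
      refine h2.congr' ?_
      filter_upwards [self_mem_nhdsWithin] with r (hr : r < 1)
      have hεp : (0:ℝ) < 1-r := by linarith
      field_simp
    have hYlim : Tendsto (fun r : ℝ => 1 + 4*r*(Real.sin ((1-r)*t/2)/(1-r))^2) l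
        (𝓝 (1 + t^2)) := by
      have h3 : Tendsto (fun r : ℝ => 4*r*(Real.sin ((1-r)*t/2)/(1-r))^2) l
          (𝓝 (4*1*(t/2)^2)) :=
        (tendsto_const_nhds.mul hrlim).mul (hsin2.pow 2)
      have h4 := (tendsto_const_nhds (x := (1:ℝ)) (f := l)).add h3
      have h5 : (1:ℝ) + 4*1*(t/2)^2 = 1 + t^2 := by ring
      rw [h5] at h4
      exact h4
    have hmodel : Tendsto (fun r : ℝ => (1+r)^lam
        * (1 + 4*r*(Real.sin ((1-r)*t/2)/(1-r))^2) ^ (-((lam+1)/2))) l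
        (𝓝 ((2:ℝ)^lam * (1+t^2) ^ (-((lam+1)/2)))) := by
      apply Tendsto.mul
      · have h6 : Tendsto (fun r:ℝ => 1+r) l (𝓝 2) := by
          have := tendsto_const_nhds (α := ℝ) (f := l) (x := (1:ℝ)) |>.add hrlim
          norm_num at this
          exact this
        exact h6.rpow_const (Or.inl (by norm_num))
      · exact hYlim.rpow_const (Or.inl (by positivity))
    exact Tendsto.congr' hev hmodel
  exact MeasureTheory.tendsto_integral_filter_of_dominated_convergence bound hmeas hbound
    hbint hlim

lemma const_val {lam : ℝ} (hlam : 0 < lam) :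
    Real.Gamma lam / (Real.Gamma (lam/2 + 1/2))^2
      = (1/π) * ((2:ℝ)^lam * (Real.sqrt π * Real.Gamma (lam/2) / (2 * Real.Gamma ((lam+1)/2)))) := by
  have hdup := Real.Gamma_mul_Gamma_add_half (lam/2)
  rw [show 2*(lam/2) = lam by ring] at hdup
  have hB : 0 < Real.Gamma ((lam+1)/2) := Real.Gamma_pos_of_pos (by linarith)
  have h2 : (2:ℝ)^lam * 2^(1-lam) = 2 := by
    rw [← Real.rpow_add (by norm_num : (0:ℝ) < 2)]
    norm_num
  have hss : Real.sqrt π * Real.sqrt π = π := Real.mul_self_sqrt Real.pi_pos.le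
  have hsp : 0 < Real.sqrt π := Real.sqrt_pos.mpr Real.pi_pos
  have hC : Real.Gamma lam
      = Real.Gamma (lam/2) * Real.Gamma ((lam+1)/2) * (2:ℝ)^lam / (2 * Real.sqrt π) := by
    rw [eq_div_iff (by positivity)]
    rw [show lam/2 + 1/2 = (lam+1)/2 by ring] at hdup
    linear_combination (-(2:ℝ)^lam) * hdup - Real.Gamma lam * Real.sqrt π * h2
  rw [show lam/2 + 1/2 = (lam+1)/2 by ring, hC]
  field_simp
  linear_combination (-1) * hss

theorem stmt2 (lam : ℝ) (hlam : 0 < lam) :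
    Filter.Tendsto (fun r : ℝ => Ilam lam r) (nhdsWithin 1 (Set.Iio 1))
      (nhds (Real.Gamma lam / (Real.Gamma (lam / 2 + 1 / 2)) ^ 2)) := by
  have hval : Real.Gamma lam / (Real.Gamma (lam/2 + 1/2))^2
      = (1/π) * ∫ t in Ioi (0:ℝ), (2:ℝ)^lam * (1+t^2) ^ (-((lam+1)/2)) := by
    rw [MeasureTheory.integral_const_mul, J_val hlam]
    exact const_val hlam
  rw [hval]
  refine Tendsto.congr' ?_ (Tendsto.const_mul (1/π) (step_B hlam))
  filter_upwards [Ioo_mem_nhdsLT_of_mem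
    (show (1:ℝ) ∈ Ioc (0:ℝ) 1 from ⟨one_pos, le_refl 1⟩)] with r hr
  exact (step_A hr).symm
end
end

section
/- The function K_{α,β}(z) = (1-|z|²)^{α+β+1} / ((1-z)^{α+1}(1-z̄)^{β+1}) is (α,β)-harmonic on the unit disc, i.e. it satisfies (1-|z|²) ∂_z ∂_{z̄} K_{α,β} + α z ∂_z K_{α,β} + β z̄ ∂_{z̄} K_{α,β} − αβ K_{α,β} = 0. -/
noncomputable section

open Complex MeasureTheory intervalIntegral Real Filter

namespace Stmt7Aux

def LM (p q : ℂ) : ℂ →L[ℝ] ℂ :=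
  p • (ContinuousLinearMap.id ℝ ℂ) + q • (Complex.conjCLE : ℂ ≃L[ℝ] ℂ).toContinuousLinearMap

@[simp] lemma LM_apply (p q v : ℂ) : LM p q v = p * v + q * (starRingEnd ℂ) v := by
  simp [LM, smul_eq_mul]

lemma clm_ext {L₁ L₂ : ℂ →L[ℝ] ℂ} (h1 : L₁ 1 = L₂ 1) (hI : L₁ Complex.I = L₂ Complex.I) :
    L₁ = L₂ := by
  ext v
  have hv : v = v.re • (1:ℂ) + v.im • Complex.I := by
    rw [Complex.real_smul, Complex.real_smul, mul_one, Complex.re_add_im]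
  rw [hv, map_add, map_add, _root_.map_smul, _root_.map_smul, _root_.map_smul, _root_.map_smul, h1, hI]

lemma wdz_eq {u : ℂ → ℂ} {p q : ℂ} {z : ℂ} (h : HasFDerivAt u (LM p q) z) :
    wdz u z = p := by
  rw [wdz, h.fderiv]
  simp only [LM_apply, map_one, Complex.conj_I, mul_one]
  have hI := Complex.I_sq
  linear_combination (q / 2 - p / 2) * hI

lemma wdzbar_eq {u : ℂ → ℂ} {p q : ℂ} {z : ℂ} (h : HasFDerivAt u (LM p q) z) :
    wdzbar u z = q := by
  rw [wdzbar, h.fderiv]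
  simp only [LM_apply, map_one, Complex.conj_I, mul_one]
  have hI := Complex.I_sq
  linear_combination (p / 2 - q / 2) * hI

variable {z : ℂ}

lemma LM_id : HasFDerivAt (fun w : ℂ => w) (LM 1 0) z := by
  refine (hasFDerivAt_id z).congr_fderiv ?_
  exact clm_ext (by simp) (by simp)

lemma LM_conj : HasFDerivAt (fun w : ℂ => (starRingEnd ℂ) w) (LM 0 1) z := by
  refine (Complex.conjCLE.hasFDerivAt).congr_fderiv ?_
  exact clm_ext (by simp) (by simp)

lemma LM_const (m : ℂ) : HasFDerivAt (fun _ : ℂ => m) (LM 0 0) z := by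
  refine (hasFDerivAt_const m z).congr_fderiv ?_
  exact clm_ext (by simp) (by simp)

lemma LM_mul {u v : ℂ → ℂ} {p q p' q' : ℂ} (hu : HasFDerivAt u (LM p q) z)
    (hv : HasFDerivAt v (LM p' q') z) :
    HasFDerivAt (fun w => u w * v w) (LM (u z * p' + v z * p) (u z * q' + v z * q)) z := by
  refine (hu.mul hv).congr_fderiv ?_
  refine clm_ext ?_ ?_ <;>
    simp [LM_apply, smul_eq_mul, Complex.conj_I] <;> ring

lemma LM_sub {u v : ℂ → ℂ} {p q p' q' : ℂ} (hu : HasFDerivAt u (LM p q) z)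
    (hv : HasFDerivAt v (LM p' q') z) :
    HasFDerivAt (fun w => u w - v w) (LM (p - p') (q - q')) z := by
  refine (hu.sub hv).congr_fderiv ?_
  refine clm_ext ?_ ?_ <;> simp [LM_apply, Complex.conj_I] <;> ring

lemma LM_neg {u : ℂ → ℂ} {p q : ℂ} (hu : HasFDerivAt u (LM p q) z) :
    HasFDerivAt (fun w => -(u w)) (LM (-p) (-q)) z := by
  refine hu.neg.congr_fderiv ?_
  refine clm_ext ?_ ?_ <;> simp [LM_apply, Complex.conj_I] <;> ring

lemma LM_comp_deriv {f : ℂ → ℂ} {m : ℂ} {u : ℂ → ℂ} {p q : ℂ}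
    (hf : HasDerivAt f m (u z)) (hu : HasFDerivAt u (LM p q) z) :
    HasFDerivAt (fun w => f (u w)) (LM (m * p) (m * q)) z := by
  have h1 : HasFDerivAt f
      ((ContinuousLinearMap.smulRight (1 : ℂ →L[ℂ] ℂ) m).restrictScalars ℝ) (u z) :=
    (hf.hasFDerivAt).restrictScalars ℝ
  refine (h1.comp z hu).congr_fderiv ?_
  refine clm_ext ?_ ?_ <;>
    simp [LM_apply, smul_eq_mul, Complex.conj_I] <;> ring

lemma Fslit (hz : ‖z‖ < 1) :
    (1 - z * (starRingEnd ℂ) z) ∈ Complex.slitPlane := by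
  have h : z * (starRingEnd ℂ) z = ((‖z‖ ^ 2 : ℝ) : ℂ) := by
    rw [Complex.mul_conj, Complex.sq_norm]
  have h2 : (1 : ℂ) - ((‖z‖ ^ 2 : ℝ) : ℂ) = (((1 - ‖z‖ ^ 2 : ℝ)) : ℂ) := by
    push_cast; ring
  rw [h, h2]
  exact Complex.ofReal_mem_slitPlane.mpr (by nlinarith [norm_nonneg z])

lemma oneSubSlit (hz : ‖z‖ < 1) : (1 - z) ∈ Complex.slitPlane := by
  refine Or.inl ?_
  simp only [Complex.sub_re, Complex.one_re]
  have h1 : |z.re| ≤ ‖z‖ := Complex.abs_re_le_norm z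
  have h2 : z.re ≤ |z.re| := le_abs_self _
  linarith

lemma oneSubConjSlit (hz : ‖z‖ < 1) :
    (1 - (starRingEnd ℂ) z) ∈ Complex.slitPlane := by
  refine Or.inl ?_
  simp only [Complex.sub_re, Complex.one_re, Complex.conj_re]
  have h1 : |z.re| ≤ ‖z‖ := Complex.abs_re_le_norm z
  have h2 : z.re ≤ |z.re| := le_abs_self _
  linarith

lemma hb1 (e : ℂ) (hz : ‖z‖ < 1) :
    HasFDerivAt (fun w : ℂ => (1 - w * (starRingEnd ℂ) w) ^ e)
      (LM (-(e * (1 - z * (starRingEnd ℂ) z) ^ (e - 1) * (starRingEnd ℂ) z))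
          (-(e * (1 - z * (starRingEnd ℂ) z) ^ (e - 1) * z))) z := by
  have hF : HasFDerivAt (fun w : ℂ => 1 - w * (starRingEnd ℂ) w)
      (LM (0 - (z * 0 + (starRingEnd ℂ) z * 1)) (0 - (z * 1 + (starRingEnd ℂ) z * 0))) z :=
    LM_sub (LM_const 1) (LM_mul LM_id LM_conj)
  have hcp : HasDerivAt (fun t : ℂ => t ^ e)
      (e * (1 - z * (starRingEnd ℂ) z) ^ (e - 1)) (1 - z * (starRingEnd ℂ) z) :=
    (Complex.hasStrictDerivAt_cpow_const (Fslit hz)).hasDerivAt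
  refine (LM_comp_deriv (u := fun w : ℂ => 1 - w * (starRingEnd ℂ) w) hcp hF).congr_fderiv ?_
  refine clm_ext ?_ ?_ <;> simp only [LM_apply] <;> ring

lemma hb2 (e : ℂ) (hz : ‖z‖ < 1) :
    HasFDerivAt (fun w : ℂ => (1 - w) ^ e)
      (LM (-(e * (1 - z) ^ (e - 1))) 0) z := by
  have hF : HasFDerivAt (fun w : ℂ => 1 - w) (LM (0 - 1) (0 - 0)) z :=
    LM_sub (LM_const 1) LM_id
  have hcp : HasDerivAt (fun t : ℂ => t ^ e) (e * (1 - z) ^ (e - 1)) (1 - z) :=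
    (Complex.hasStrictDerivAt_cpow_const (oneSubSlit hz)).hasDerivAt
  refine (LM_comp_deriv (u := fun w : ℂ => 1 - w) hcp hF).congr_fderiv ?_
  refine clm_ext ?_ ?_ <;> simp only [LM_apply] <;> ring

lemma hb3 (e : ℂ) (hz : ‖z‖ < 1) :
    HasFDerivAt (fun w : ℂ => (1 - (starRingEnd ℂ) w) ^ e)
      (LM 0 (-(e * (1 - (starRingEnd ℂ) z) ^ (e - 1)))) z := by
  have hF : HasFDerivAt (fun w : ℂ => 1 - (starRingEnd ℂ) w) (LM (0 - 0) (0 - 1)) z :=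
    LM_sub (LM_const 1) LM_conj
  have hcp : HasDerivAt (fun t : ℂ => t ^ e)
      (e * (1 - (starRingEnd ℂ) z) ^ (e - 1)) (1 - (starRingEnd ℂ) z) :=
    (Complex.hasStrictDerivAt_cpow_const (oneSubConjSlit hz)).hasDerivAt
  refine (LM_comp_deriv (u := fun w : ℂ => 1 - (starRingEnd ℂ) w) hcp hF).congr_fderiv ?_
  refine clm_ext ?_ ?_ <;> simp only [LM_apply] <;> ring

lemma key (e1 e2 e3 : ℂ) (hz : ‖z‖ < 1) :
    HasFDerivAt
      (fun w : ℂ => (1 - w * (starRingEnd ℂ) w) ^ e1 *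
        ((1 - w) ^ e2 * (1 - (starRingEnd ℂ) w) ^ e3))
      (LM
        (-(e2 * (1 - z) ^ (e2 - 1) *
            ((1 - z * (starRingEnd ℂ) z) ^ e1 * (1 - (starRingEnd ℂ) z) ^ e3))
          - e1 * (starRingEnd ℂ) z * (1 - z * (starRingEnd ℂ) z) ^ (e1 - 1) *
            ((1 - z) ^ e2 * (1 - (starRingEnd ℂ) z) ^ e3))
        (-(e3 * (1 - (starRingEnd ℂ) z) ^ (e3 - 1) *
            ((1 - z * (starRingEnd ℂ) z) ^ e1 * (1 - z) ^ e2))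
          - e1 * z * (1 - z * (starRingEnd ℂ) z) ^ (e1 - 1) *
            ((1 - z) ^ e2 * (1 - (starRingEnd ℂ) z) ^ e3))) z := by
  refine (LM_mul (hb1 e1 hz) (LM_mul (hb2 e2 hz) (hb3 e3 hz))).congr_fderiv ?_
  refine clm_ext ?_ ?_ <;> simp only [LM_apply] <;> ring

def KP (a b : ℝ) (z : ℂ) : ℂ :=
  -(-((a + 1 : ℝ) : ℂ) * (1 - z) ^ (-((a + 1 : ℝ) : ℂ) - 1) *
      ((1 - z * (starRingEnd ℂ) z) ^ ((a + b + 1 : ℝ) : ℂ) *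
        (1 - (starRingEnd ℂ) z) ^ (-((b + 1 : ℝ) : ℂ))))
    - ((a + b + 1 : ℝ) : ℂ) * (starRingEnd ℂ) z *
        (1 - z * (starRingEnd ℂ) z) ^ (((a + b + 1 : ℝ) : ℂ) - 1) *
        ((1 - z) ^ (-((a + 1 : ℝ) : ℂ)) * (1 - (starRingEnd ℂ) z) ^ (-((b + 1 : ℝ) : ℂ)))

def KQ (a b : ℝ) (z : ℂ) : ℂ :=
  -(-((b + 1 : ℝ) : ℂ) * (1 - (starRingEnd ℂ) z) ^ (-((b + 1 : ℝ) : ℂ) - 1) *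
      ((1 - z * (starRingEnd ℂ) z) ^ ((a + b + 1 : ℝ) : ℂ) * (1 - z) ^ (-((a + 1 : ℝ) : ℂ))))
    - ((a + b + 1 : ℝ) : ℂ) * z *
        (1 - z * (starRingEnd ℂ) z) ^ (((a + b + 1 : ℝ) : ℂ) - 1) *
        ((1 - z) ^ (-((a + 1 : ℝ) : ℂ)) * (1 - (starRingEnd ℂ) z) ^ (-((b + 1 : ℝ) : ℂ)))

lemma Kab_eq (a b : ℝ) : Kab a b = fun w : ℂ =>
    (1 - w * (starRingEnd ℂ) w) ^ ((a + b + 1 : ℝ) : ℂ) *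
      ((1 - w) ^ (-((a + 1 : ℝ) : ℂ)) * (1 - (starRingEnd ℂ) w) ^ (-((b + 1 : ℝ) : ℂ))) := by
  funext w
  have h : ((‖w‖ : ℂ)) ^ 2 = w * (starRingEnd ℂ) w := by
    rw [← Complex.ofReal_pow, Complex.sq_norm, Complex.mul_conj]
  simp only [Kab, h, Complex.cpow_neg]
  rw [div_eq_mul_inv, mul_inv]

lemma Kab_hasFDeriv (a b : ℝ) {z : ℂ} (hz : ‖z‖ < 1) :
    HasFDerivAt (Kab a b) (LM (KP a b z) (KQ a b z)) z := by
  have h := key (z := z) ((a + b + 1 : ℝ) : ℂ) (-((a + 1 : ℝ) : ℂ)) (-((b + 1 : ℝ) : ℂ)) hz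
  rw [← Kab_eq a b] at h
  refine h.congr_fderiv ?_
  refine clm_ext ?_ ?_ <;> simp only [LM_apply, KP, KQ]

end Stmt7Aux

theorem stmt7 (a b : ℝ) (z : ℂ) (hz : ‖z‖ < 1) :
    (1 - (‖z‖ : ℂ) ^ 2) * wdz (wdzbar (Kab a b)) z + (a : ℂ) * z * wdz (Kab a b) z +
        (b : ℂ) * (starRingEnd ℂ) z * wdzbar (Kab a b) z - (a : ℂ) * (b : ℂ) * Kab a b z = 0 := by
  have hKd := Stmt7Aux.Kab_hasFDeriv a b hz
  have hopen : IsOpen {w : ℂ | ‖w‖ < 1} :=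
    isOpen_lt continuous_norm continuous_const
  have hev : wdzbar (Kab a b) =ᶠ[nhds z] Stmt7Aux.KQ a b :=
    Filter.eventuallyEq_of_mem (hopen.mem_nhds hz)
      (fun w hw => Stmt7Aux.wdzbar_eq (Stmt7Aux.Kab_hasFDeriv a b hw))
  have h1 : wdz (wdzbar (Kab a b)) z = wdz (Stmt7Aux.KQ a b) z := by
    unfold wdz; rw [hev.fderiv_eq]
  have hQd : HasFDerivAt (Stmt7Aux.KQ a b) _ z :=
    Stmt7Aux.LM_sub
      (Stmt7Aux.LM_neg
        (Stmt7Aux.LM_mul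
          (Stmt7Aux.LM_mul (Stmt7Aux.LM_const (-((b + 1 : ℝ) : ℂ)))
            (Stmt7Aux.hb3 (-((b + 1 : ℝ) : ℂ) - 1) hz))
          (Stmt7Aux.LM_mul (Stmt7Aux.hb1 ((a + b + 1 : ℝ) : ℂ) hz)
            (Stmt7Aux.hb2 (-((a + 1 : ℝ) : ℂ)) hz))))
      (Stmt7Aux.LM_mul
        (Stmt7Aux.LM_mul
          (Stmt7Aux.LM_mul (Stmt7Aux.LM_const (((a + b + 1 : ℝ) : ℂ))) Stmt7Aux.LM_id)
          (Stmt7Aux.hb1 (((a + b + 1 : ℝ) : ℂ) - 1) hz))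
        (Stmt7Aux.LM_mul (Stmt7Aux.hb2 (-((a + 1 : ℝ) : ℂ)) hz)
          (Stmt7Aux.hb3 (-((b + 1 : ℝ) : ℂ)) hz)))
  rw [h1, Stmt7Aux.wdz_eq hQd, Stmt7Aux.wdz_eq hKd, Stmt7Aux.wdzbar_eq hKd]
  have habs : ((‖z‖ : ℂ)) ^ 2 = z * (starRingEnd ℂ) z := by
    rw [← Complex.ofReal_pow, Complex.sq_norm, Complex.mul_conj]
  have hFne : (1 - z * (starRingEnd ℂ) z) ≠ 0 :=
    Complex.slitPlane_ne_zero (Stmt7Aux.Fslit hz)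
  have h2ne : (1 - z) ≠ 0 := Complex.slitPlane_ne_zero (Stmt7Aux.oneSubSlit hz)
  have h3ne : (1 - (starRingEnd ℂ) z) ≠ 0 :=
    Complex.slitPlane_ne_zero (Stmt7Aux.oneSubConjSlit hz)
  have eF1 : (1 - z * (starRingEnd ℂ) z) ^ ((a + b + 1 : ℝ) : ℂ) =
      (1 - z * (starRingEnd ℂ) z) ^ (((a + b + 1 : ℝ) : ℂ) - 1) * (1 - z * (starRingEnd ℂ) z) := by
    have h := Complex.cpow_add (((a + b + 1 : ℝ) : ℂ) - 1) 1 hFne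
    rw [Complex.cpow_one] at h
    rw [show ((a + b + 1 : ℝ) : ℂ) - 1 + 1 = ((a + b + 1 : ℝ) : ℂ) from by ring] at h
    exact h
  have eF2 : (1 - z * (starRingEnd ℂ) z) ^ (((a + b + 1 : ℝ) : ℂ) - 1) =
      (1 - z * (starRingEnd ℂ) z) ^ (((a + b + 1 : ℝ) : ℂ) - 1 - 1) *
        (1 - z * (starRingEnd ℂ) z) := by
    have h := Complex.cpow_add (((a + b + 1 : ℝ) : ℂ) - 1 - 1) 1 hFne
    rw [Complex.cpow_one] at h
    rw [show ((a + b + 1 : ℝ) : ℂ) - 1 - 1 + 1 = ((a + b + 1 : ℝ) : ℂ) - 1 from by ring] at h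
    exact h
  have eg : (1 - z) ^ (-((a + 1 : ℝ) : ℂ)) =
      (1 - z) ^ (-((a + 1 : ℝ) : ℂ) - 1) * (1 - z) := by
    have h := Complex.cpow_add (-((a + 1 : ℝ) : ℂ) - 1) 1 h2ne
    rw [Complex.cpow_one] at h
    rw [show -((a + 1 : ℝ) : ℂ) - 1 + 1 = -((a + 1 : ℝ) : ℂ) from by ring] at h
    exact h
  have eh : (1 - (starRingEnd ℂ) z) ^ (-((b + 1 : ℝ) : ℂ)) =
      (1 - (starRingEnd ℂ) z) ^ (-((b + 1 : ℝ) : ℂ) - 1) * (1 - (starRingEnd ℂ) z) := by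
    have h := Complex.cpow_add (-((b + 1 : ℝ) : ℂ) - 1) 1 h3ne
    rw [Complex.cpow_one] at h
    rw [show -((b + 1 : ℝ) : ℂ) - 1 + 1 = -((b + 1 : ℝ) : ℂ) from by ring] at h
    exact h
  simp only [Stmt7Aux.KP, Stmt7Aux.KQ, Stmt7Aux.Kab_eq a b, habs]
  simp only [eF1, eF2, eg, eh]
  push_cast
  ring
end
end

section
/- For real α, β with α+β > -1 and f absolutely continuous on 𝕋 with derivative ḟ(e^{iθ}) = d/dθ f(e^{iθ}) in L¹(𝕋), the angular derivative of u = P_{α,β}[f] satisfies ∂_θ u(re^{iθ}) = P_{α,β}[ḟ](re^{iθ}) for all r ∈ [0,1) and θ. -/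
noncomputable section

open Complex MeasureTheory intervalIntegral Real Filter

namespace Stmt10Aux

def E1 (s : ℝ) : ℂ := Complex.exp (-(s : ℂ) * Complex.I)
def E2 (s : ℝ) : ℂ := Complex.exp ((s : ℂ) * Complex.I)

lemma contE1 : Continuous E1 := Complex.continuous_exp.comp (by continuity)
lemma contE2 : Continuous E2 := Complex.continuous_exp.comp (by continuity)

lemma E1_per (s : ℝ) : E1 (s + 2 * π) = E1 s := by
  unfold E1
  have h := Complex.exp_periodic.sub_eq (-(s : ℂ) * Complex.I)
  rw [← h]
  congr 1
  push_cast
  ring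

lemma E2_per (s : ℝ) : E2 (s + 2 * π) = E2 s := by
  unfold E2
  have h := Complex.exp_periodic ((s : ℂ) * Complex.I)
  rw [← h]
  congr 1
  push_cast
  ring

lemma hE1d (s : ℝ) : HasDerivAt E1 (-Complex.I * E1 s) s := by
  have h : HasDerivAt (fun z : ℂ => Complex.exp (-z * Complex.I))
      (Complex.exp (-(s : ℂ) * Complex.I) * (-1 * Complex.I)) (s : ℂ) :=
    (((hasDerivAt_id ((s : ℂ))).neg).mul_const Complex.I).cexp
  have h2 := h.comp_ofReal
  convert h2 using 1
  all_goals (unfold E1; ring)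

lemma hE2d (s : ℝ) : HasDerivAt E2 (Complex.I * E2 s) s := by
  have h : HasDerivAt (fun z : ℂ => Complex.exp (z * Complex.I))
      (Complex.exp ((s : ℂ) * Complex.I) * (1 * Complex.I)) (s : ℂ) :=
    ((hasDerivAt_id ((s : ℂ))).mul_const Complex.I).cexp
  have h2 := h.comp_ofReal
  convert h2 using 1
  all_goals (unfold E2; ring)

variable {r : ℝ}

lemma re1 (hr0 : 0 ≤ r) (hr1 : r < 1) (s : ℝ) : 0 < (1 - (r : ℂ) * E1 s).re := by
  have h : (r : ℂ) * E1 s = (r : ℂ) * Complex.exp (((-s : ℝ) : ℂ) * Complex.I) := by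
    unfold E1; push_cast; ring_nf
  rw [h]
  have : ((r : ℂ) * Complex.exp (((-s : ℝ) : ℂ) * Complex.I)).re = r * Real.cos (-s) := by
    rw [Complex.mul_re, Complex.ofReal_re, Complex.ofReal_im, Complex.exp_ofReal_mul_I_re]
    simp
  simp only [Complex.sub_re, Complex.one_re, this]
  nlinarith [Real.neg_one_le_cos (-s), Real.cos_le_one (-s)]

lemma re2 (hr0 : 0 ≤ r) (hr1 : r < 1) (s : ℝ) : 0 < (1 - (r : ℂ) * E2 s).re := by
  have : ((r : ℂ) * E2 s).re = r * Real.cos s := by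
    unfold E2
    rw [Complex.mul_re, Complex.ofReal_re, Complex.ofReal_im, Complex.exp_ofReal_mul_I_re]
    simp
  simp only [Complex.sub_re, Complex.one_re, this]
  nlinarith [Real.neg_one_le_cos s, Real.cos_le_one s]

lemma cpow_ne {w : ℂ} (hw : 0 < w.re) (c : ℂ) : w ^ c ≠ 0 := by
  have hw0 : w ≠ 0 := by
    intro h; rw [h] at hw; simp at hw
  rw [Complex.cpow_def_of_ne_zero hw0]
  exact Complex.exp_ne_zero _

def den (a b r : ℝ) (s : ℝ) : ℂ :=
  (1 - (r : ℂ) * E1 s) ^ ((a + 1 : ℝ) : ℂ) * (1 - (r : ℂ) * E2 s) ^ ((b + 1 : ℝ) : ℂ)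

def KK (a b r : ℝ) (s : ℝ) : ℂ := ((1 - r ^ 2 : ℝ) : ℂ) ^ ((a + b + 1 : ℝ) : ℂ) / den a b r s

def dden (a b r : ℝ) (s : ℝ) : ℂ :=
  ((a + 1 : ℝ) : ℂ) * (1 - (r : ℂ) * E1 s) ^ (((a + 1 : ℝ) : ℂ) - 1) * ((r : ℂ) * Complex.I * E1 s)
      * (1 - (r : ℂ) * E2 s) ^ ((b + 1 : ℝ) : ℂ)
    + (1 - (r : ℂ) * E1 s) ^ ((a + 1 : ℝ) : ℂ) *
      (((b + 1 : ℝ) : ℂ) * (1 - (r : ℂ) * E2 s) ^ (((b + 1 : ℝ) : ℂ) - 1)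
        * (-((r : ℂ) * Complex.I * E2 s)))

def KKd (a b r : ℝ) (s : ℝ) : ℂ :=
  ((1 - r ^ 2 : ℝ) : ℂ) ^ ((a + b + 1 : ℝ) : ℂ) * (-dden a b r s / den a b r s ^ 2)

lemma den_ne (hr0 : 0 ≤ r) (hr1 : r < 1) (a b s : ℝ) : den a b r s ≠ 0 :=
  mul_ne_zero (cpow_ne (re1 hr0 hr1 s) _) (cpow_ne (re2 hr0 hr1 s) _)

lemma hasDerivAt_KK (hr0 : 0 ≤ r) (hr1 : r < 1) (a b s : ℝ) :
    HasDerivAt (KK a b r) (KKd a b r s) s := by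
  have hw1 : HasDerivAt (fun z : ℂ => 1 - (r : ℂ) * Complex.exp (-z * Complex.I))
      ((r : ℂ) * Complex.I * E1 s) (s : ℂ) := by
    have h := ((((hasDerivAt_id ((s : ℂ))).neg.mul_const Complex.I).cexp).const_mul
      (r : ℂ)).const_sub 1
    refine h.congr_deriv ?_
    simp only [Pi.neg_apply, id_eq]
    unfold E1; ring
  have hw2 : HasDerivAt (fun z : ℂ => 1 - (r : ℂ) * Complex.exp (z * Complex.I))
      (-((r : ℂ) * Complex.I * E2 s)) (s : ℂ) := by
    have h := ((((hasDerivAt_id ((s : ℂ))).mul_const Complex.I).cexp).const_mul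
      (r : ℂ)).const_sub 1
    refine h.congr_deriv ?_
    simp only [id_eq]
    unfold E2; ring
  have hq1 := hw1.cpow_const (c := ((a + 1 : ℝ) : ℂ)) (Or.inl (re1 hr0 hr1 s))
  have hq2 := hw2.cpow_const (c := ((b + 1 : ℝ) : ℂ)) (Or.inl (re2 hr0 hr1 s))
  have hD := hq1.mul hq2
  have hne : den a b r s ≠ 0 := den_ne hr0 hr1 a b s
  have hinv := hD.inv (by simpa [den, E1, E2] using hne)
  have hK := (hinv.const_mul (((1 - r ^ 2 : ℝ) : ℂ) ^ ((a + b + 1 : ℝ) : ℂ))).comp_ofReal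
  have heq : KK a b r = fun t : ℝ => ((1 - r ^ 2 : ℝ) : ℂ) ^ ((a + b + 1 : ℝ) : ℂ)
      * (den a b r t)⁻¹ := by
    funext t; rw [KK, div_eq_mul_inv]
  rw [heq]
  exact hK

lemma cont_cpow1 (hr0 : 0 ≤ r) (hr1 : r < 1) (c : ℂ) :
    Continuous (fun s => (1 - (r : ℂ) * E1 s) ^ c) := by
  rw [continuous_iff_continuousAt]
  intro s
  exact ContinuousAt.cpow ((continuous_const.sub (continuous_const.mul contE1)).continuousAt)
    continuousAt_const (Or.inl (re1 hr0 hr1 s))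

lemma cont_cpow2 (hr0 : 0 ≤ r) (hr1 : r < 1) (c : ℂ) :
    Continuous (fun s => (1 - (r : ℂ) * E2 s) ^ c) := by
  rw [continuous_iff_continuousAt]
  intro s
  exact ContinuousAt.cpow ((continuous_const.sub (continuous_const.mul contE2)).continuousAt)
    continuousAt_const (Or.inl (re2 hr0 hr1 s))

lemma cont_den (hr0 : 0 ≤ r) (hr1 : r < 1) (a b : ℝ) : Continuous (den a b r) :=
  (cont_cpow1 hr0 hr1 _).mul (cont_cpow2 hr0 hr1 _)

lemma cont_KK (hr0 : 0 ≤ r) (hr1 : r < 1) (a b : ℝ) : Continuous (KK a b r) :=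
  continuous_const.div (cont_den hr0 hr1 a b) (den_ne hr0 hr1 a b)

lemma cont_dden (hr0 : 0 ≤ r) (hr1 : r < 1) (a b : ℝ) : Continuous (dden a b r) := by
  unfold dden
  exact (((continuous_const.mul (cont_cpow1 hr0 hr1 _)).mul
      ((continuous_const.mul contE1))).mul (cont_cpow2 hr0 hr1 _)).add
    ((cont_cpow1 hr0 hr1 _).mul ((continuous_const.mul (cont_cpow2 hr0 hr1 _)).mul
      ((continuous_const.mul contE2).neg)))

lemma cont_KKd (hr0 : 0 ≤ r) (hr1 : r < 1) (a b : ℝ) : Continuous (KKd a b r) := by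
  unfold KKd
  exact continuous_const.mul (((cont_dden hr0 hr1 a b).neg).div
    ((cont_den hr0 hr1 a b).pow 2) (fun s => pow_ne_zero 2 (den_ne hr0 hr1 a b s)))

lemma KK_per (a b : ℝ) : Function.Periodic (KK a b r) (2 * π) := by
  intro s
  simp only [KK, den, E1_per, E2_per]

lemma KKd_per (a b : ℝ) : Function.Periodic (KKd a b r) (2 * π) := by
  intro s
  simp only [KKd, dden, den, E1_per, E2_per]

lemma bound_of_per_cont {h : ℝ → ℂ} (hc : Continuous h) (hp : Function.Periodic h (2 * π)) :
    ∃ C : ℝ, 0 ≤ C ∧ ∀ s, ‖h s‖ ≤ C := by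
  obtain ⟨C, hC⟩ := (isCompact_Icc (a := (0:ℝ)) (b := 2 * π)).exists_bound_of_continuousOn
    hc.continuousOn
  refine ⟨max C 0, le_max_right _ _, fun s => ?_⟩
  obtain ⟨y, hy, hyeq⟩ := hp.exists_mem_Ico₀ Real.two_pi_pos s
  rw [hyeq]
  exact le_trans (hC y (Set.Ico_subset_Icc_self hy)) (le_max_left _ _)


lemma Kab_eq (hr0 : 0 ≤ r) (hr1 : r < 1) {a b x t : ℝ} :
    Kab a b (((r : ℂ) * Complex.exp ((x : ℂ) * Complex.I)) * Complex.exp (-(t : ℂ) * Complex.I))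
      = KK a b r (t - x) := by
  have harg : ((r : ℂ) * Complex.exp ((x : ℂ) * Complex.I)) * Complex.exp (-(t : ℂ) * Complex.I)
      = (r : ℂ) * E1 (t - x) := by
    rw [mul_assoc, ← Complex.exp_add]
    unfold E1
    push_cast
    ring_nf
  rw [harg]
  have habs : ‖(r : ℂ) * E1 (t - x)‖ = r := by
    rw [norm_mul, Complex.norm_of_nonneg hr0]
    unfold E1
    rw [Complex.norm_exp]
    simp
  have hconj : (starRingEnd ℂ) ((r : ℂ) * E1 (t - x)) = (r : ℂ) * E2 (t - x) := by
    rw [map_mul, Complex.conj_ofReal]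
    unfold E1 E2
    rw [← Complex.exp_conj]
    congr 1
    rw [map_mul, map_neg, Complex.conj_ofReal, Complex.conj_I]
    ring
  rw [Kab, habs, hconj]
  unfold KK den
  have hb : (1 - ((r : ℝ) : ℂ) ^ 2) = ((1 - r ^ 2 : ℝ) : ℂ) := by push_cast; ring
  rw [hb]

end Stmt10Aux


open Stmt10Aux in
theorem stmt10 (a b : ℝ) (hna : NotNegInt a) (hnb : NotNegInt b) (hab : -1 < a + b)
    (f fdot : ℝ → ℂ) (hf : CircleAC f fdot) (r : ℝ) (hr0 : 0 ≤ r) (hr1 : r < 1) (θ : ℝ) :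
    deriv (fun t : ℝ => Pab a b f ((r : ℂ) * Complex.exp ((t : ℂ) * Complex.I))) θ =
      Pab a b fdot ((r : ℂ) * Complex.exp ((θ : ℂ) * Complex.I)) := by
  classical
  obtain ⟨hper, hFTC, hint⟩ := hf
  have h2π : (0:ℝ) < 2 * π := Real.two_pi_pos
  -- continuity of f on [0, 2π]
  have hfc : ContinuousOn f (Set.Icc 0 (2 * π)) := by
    have h1 : ContinuousOn (fun x => f 0 + ∫ t in (0:ℝ)..x, fdot t) (Set.uIcc 0 (2 * π)) :=
      continuousOn_const.add (continuousOn_primitive_interval' hint Set.left_mem_uIcc)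
    rw [Set.uIcc_of_le h2π.le] at h1
    exact h1.congr fun x _ => hFTC x
  have hfcu : ContinuousOn f (Set.uIcc 0 (2 * π)) := by rwa [Set.uIcc_of_le h2π.le]
  -- global bounds
  obtain ⟨M, hM0, hM⟩ := bound_of_per_cont (cont_KKd hr0 hr1 a b) (KKd_per a b)
  obtain ⟨MK, hMK0, hMK⟩ := bound_of_per_cont (cont_KK hr0 hr1 a b) (KK_per a b)
  have hKKc : Continuous (fun t : ℝ => KK a b r (t - θ)) :=
    (cont_KK hr0 hr1 a b).comp (continuous_sub_right θ)
  have hKKdc : Continuous (fun t : ℝ => KKd a b r (t - θ)) :=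
    (cont_KKd hr0 hr1 a b).comp (continuous_sub_right θ)
  -- FTC for the derivative of the kernel
  have hFTCK : ∀ c d : ℝ, (∫ t in c..d, KKd a b r (t - θ))
      = KK a b r (d - θ) - KK a b r (c - θ) := by
    intro c d
    refine intervalIntegral.integral_eq_sub_of_hasDerivAt
      (f := fun t => KK a b r (t - θ)) (fun t _ => ?_) (hKKdc.intervalIntegrable c d)
    exact (hasDerivAt_KK hr0 hr1 a b (t - θ)).comp_sub_const t θ
  have hzero : (∫ t in (0:ℝ)..(2*π), KKd a b r (t - θ)) = 0 := by
    rw [hFTCK 0 (2*π)]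
    have hp := KK_per (r := r) a b (-θ)
    have h2 : 2 * π - θ = -θ + 2 * π := by ring
    rw [h2, hp, zero_sub]
    exact sub_self _
  -- the measure on (0, 2π]
  set ν : Measure ℝ := MeasureTheory.volume.restrict (Set.Ioc 0 (2*π)) with hν
  haveI : IsFiniteMeasure ν := by
    constructor
    rw [hν, Measure.restrict_apply_univ]
    exact measure_Ioc_lt_top
  have hfdotν : Integrable fdot ν := by
    have h := hint
    rw [intervalIntegrable_iff, Set.uIoc_of_le h2π.le] at h
    exact h
  have hfdot02 : (∫ t in (0:ℝ)..(2*π), fdot t) = 0 := by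
    have h1 := hFTC (2*π)
    have h2 : f (2*π) = f 0 := by simpa using hper 0
    rw [h2] at h1
    exact (left_eq_add.mp h1)
  -- Fubini for the triangle
  set g : ℝ → ℝ → ℂ := fun t σ => if σ ≤ t then KKd a b r (t - θ) * fdot σ else 0 with hg
  have hgm : AEStronglyMeasurable (Function.uncurry g) (ν.prod ν) := by
    have hs : MeasurableSet {p : ℝ × ℝ | p.2 ≤ p.1} :=
      measurableSet_le measurable_snd measurable_fst
    have h1 : AEStronglyMeasurable (fun p : ℝ × ℝ => KKd a b r (p.1 - θ) * fdot p.2)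
        (ν.prod ν) :=
      (((cont_KKd hr0 hr1 a b).comp
        (continuous_fst.sub continuous_const)).aestronglyMeasurable).mul (hfdotν.1.comp_snd)
    have he : Function.uncurry g = Set.indicator {p : ℝ × ℝ | p.2 ≤ p.1}
        (fun p => KKd a b r (p.1 - θ) * fdot p.2) := by
      funext p
      by_cases hp : p.2 ≤ p.1
      · have hmem : p ∈ {p : ℝ × ℝ | p.2 ≤ p.1} := hp
        rw [Set.indicator_of_mem hmem]
        simp [Function.uncurry, g, hp]
      · have hmem : p ∉ {p : ℝ × ℝ | p.2 ≤ p.1} := hp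
        rw [Set.indicator_of_notMem hmem]
        simp [Function.uncurry, g, hp]
    rw [he]
    exact h1.indicator hs
  have hgi : Integrable (Function.uncurry g) (ν.prod ν) := by
    have hb : Integrable (fun p : ℝ × ℝ => M * ‖fdot p.2‖) (ν.prod ν) :=
      (integrable_const M).mul_prod hfdotν.norm
    refine hb.mono' hgm (Filter.Eventually.of_forall fun p => ?_)
    by_cases hp : p.2 ≤ p.1
    · simp only [Function.uncurry, g, if_pos hp]
      rw [norm_mul]
      exact mul_le_mul_of_nonneg_right (hM _) (norm_nonneg _)
    · simp only [Function.uncurry, g, if_neg hp]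
      simpa using mul_nonneg hM0 (norm_nonneg (fdot p.2))
  have hswap : (∫ t, (∫ σ, g t σ ∂ν) ∂ν) = ∫ σ, (∫ t, g t σ ∂ν) ∂ν :=
    MeasureTheory.integral_integral_swap hgi
  -- evaluate the left-hand side
  have hIic : ∀ t ∈ Set.Ioc (0:ℝ) (2*π),
      (∫ σ, g t σ ∂ν) = KKd a b r (t - θ) * (f t - f 0) := by
    intro t ht
    have he : (fun σ => g t σ)
        = Set.indicator (Set.Iic t) (fun σ => KKd a b r (t - θ) * fdot σ) := by
      funext σ
      by_cases hσ : σ ≤ t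
      · rw [Set.indicator_of_mem (Set.mem_Iic.mpr hσ)]
        simp [g, hσ]
      · rw [Set.indicator_of_notMem (fun h => hσ (Set.mem_Iic.mp h))]
        simp [g, hσ]
    rw [he, MeasureTheory.integral_indicator measurableSet_Iic, hν,
      Measure.restrict_restrict measurableSet_Iic]
    have hset : Set.Iic t ∩ Set.Ioc 0 (2*π) = Set.Ioc 0 t := by
      ext σ
      simp only [Set.mem_inter_iff, Set.mem_Iic, Set.mem_Ioc]
      constructor
      · rintro ⟨h1, h2, _⟩; exact ⟨h2, h1⟩
      · rintro ⟨h1, h2⟩; exact ⟨h2, h1, h2.trans ht.2⟩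
    rw [hset, MeasureTheory.integral_const_mul]
    congr 1
    have h1 := hFTC t
    rw [intervalIntegral.integral_of_le ht.1.le] at h1
    rw [h1]; ring
  have hI1 : IntervalIntegrable (fun t => KKd a b r (t - θ) * f t)
      MeasureTheory.volume 0 (2*π) :=
    (hKKdc.continuousOn.mul hfcu).intervalIntegrable
  have hI2 : IntervalIntegrable (fun t => KKd a b r (t - θ) * f 0)
      MeasureTheory.volume 0 (2*π) := (hKKdc.mul continuous_const).intervalIntegrable 0 (2*π)
  have hLHS : (∫ t, (∫ σ, g t σ ∂ν) ∂ν)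
      = ∫ t in (0:ℝ)..(2*π), KKd a b r (t - θ) * f t := by
    rw [hν, MeasureTheory.setIntegral_congr_fun measurableSet_Ioc hIic,
      ← intervalIntegral.integral_of_le h2π.le]
    have heq : Set.EqOn (fun t => KKd a b r (t - θ) * (f t - f 0))
        (fun t => KKd a b r (t - θ) * f t - KKd a b r (t - θ) * f 0)
        (Set.uIcc 0 (2*π)) := fun t _ => by ring
    rw [intervalIntegral.integral_congr heq, intervalIntegral.integral_sub hI1 hI2,
      intervalIntegral.integral_mul_const, hzero]
    simp
  -- evaluate the right-hand side
  have hIci : ∀ σ ∈ Set.Ioc (0:ℝ) (2*π),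
      (∫ t, g t σ ∂ν) = (KK a b r (2*π - θ) - KK a b r (σ - θ)) * fdot σ := by
    intro σ hσ
    have he : (fun t => g t σ)
        = Set.indicator (Set.Ici σ) (fun t => KKd a b r (t - θ) * fdot σ) := by
      funext t
      by_cases hσt : σ ≤ t
      · rw [Set.indicator_of_mem (Set.mem_Ici.mpr hσt)]
        simp [g, hσt]
      · rw [Set.indicator_of_notMem (fun h => hσt (Set.mem_Ici.mp h))]
        simp [g, hσt]
    rw [he, MeasureTheory.integral_indicator measurableSet_Ici, hν,
      Measure.restrict_restrict measurableSet_Ici]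
    have hset : Set.Ici σ ∩ Set.Ioc 0 (2*π) = Set.Icc σ (2*π) := by
      ext t
      simp only [Set.mem_inter_iff, Set.mem_Ici, Set.mem_Ioc, Set.mem_Icc]
      constructor
      · rintro ⟨h1, _, h3⟩; exact ⟨h1, h3⟩
      · rintro ⟨h1, h2⟩; exact ⟨h1, lt_of_lt_of_le hσ.1 h1, h2⟩
    rw [hset, MeasureTheory.integral_Icc_eq_integral_Ioc,
      ← intervalIntegral.integral_of_le hσ.2, intervalIntegral.integral_mul_const,
      hFTCK σ (2*π)]
  have hJ1 : IntervalIntegrable (fun σ => KK a b r (2*π - θ) * fdot σ)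
      MeasureTheory.volume 0 (2*π) := hint.const_mul _
  have hJ2 : IntervalIntegrable (fun σ => KK a b r (σ - θ) * fdot σ)
      MeasureTheory.volume 0 (2*π) := by
    rw [intervalIntegrable_iff, Set.uIoc_of_le h2π.le]
    exact Integrable.bdd_mul hfdotν hKKc.aestronglyMeasurable (Filter.Eventually.of_forall fun t => hMK _)
  have hRHS : (∫ σ, (∫ t, g t σ ∂ν) ∂ν)
      = -∫ t in (0:ℝ)..(2*π), KK a b r (t - θ) * fdot t := by
    rw [hν, MeasureTheory.setIntegral_congr_fun measurableSet_Ioc hIci,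
      ← intervalIntegral.integral_of_le h2π.le]
    have heq : Set.EqOn (fun σ => (KK a b r (2*π - θ) - KK a b r (σ - θ)) * fdot σ)
        (fun σ => KK a b r (2*π - θ) * fdot σ - KK a b r (σ - θ) * fdot σ)
        (Set.uIcc 0 (2*π)) := fun σ _ => by ring
    rw [intervalIntegral.integral_congr heq, intervalIntegral.integral_sub hJ1 hJ2,
      intervalIntegral.integral_const_mul, hfdot02]
    simp
  have key : (∫ t in (0:ℝ)..(2*π), KKd a b r (t - θ) * f t)
      = -∫ t in (0:ℝ)..(2*π), KK a b r (t - θ) * fdot t := by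
    rw [← hLHS, ← hRHS]; exact hswap
  -- measurability of f on the interval
  have hf_aesm : AEStronglyMeasurable f
      (MeasureTheory.volume.restrict (Set.uIoc 0 (2*π))) := by
    rw [Set.uIoc_of_le h2π.le]
    exact (hfc.mono Set.Ioc_subset_Icc_self).aestronglyMeasurable measurableSet_Ioc
  -- differentiation under the integral sign
  have main : HasDerivAt (fun x : ℝ => ∫ t in (0:ℝ)..(2*π), KK a b r (t - x) * f t)
      (∫ t in (0:ℝ)..(2*π), -(KKd a b r (t - θ)) * f t) θ := by
    refine (intervalIntegral.hasDerivAt_integral_of_dominated_loc_of_deriv_le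
      (F' := fun x t => -(KKd a b r (t - x)) * f t)
      (bound := fun t => M * ‖f t‖) (s := Set.univ) Filter.univ_mem ?_ ?_ ?_ ?_ ?_ ?_).2
    · exact Filter.Eventually.of_forall fun x =>
        (((cont_KK hr0 hr1 a b).comp (continuous_sub_right x)).aestronglyMeasurable).mul hf_aesm
    · exact (hKKc.continuousOn.mul hfcu).intervalIntegrable
    · exact ((hKKdc.neg).aestronglyMeasurable).mul hf_aesm
    · refine Filter.Eventually.of_forall fun t _ x _ => ?_
      rw [norm_mul, norm_neg]
      exact mul_le_mul_of_nonneg_right (hM _) (norm_nonneg _)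
    · exact (continuousOn_const.mul hfcu.norm).intervalIntegrable
    · refine Filter.Eventually.of_forall fun t _ x _ => ?_
      have h1 : HasDerivAt (fun x : ℝ => KK a b r (t - x)) (-(KKd a b r (t - x))) x := by
        exact (hasDerivAt_KK hr0 hr1 a b (t - x)).comp_const_sub t x
      exact h1.mul_const (f t)
  -- assembling
  have hrepr : ∀ (g : ℝ → ℂ) (x : ℝ),
      Pab a b g ((r : ℂ) * Complex.exp ((x : ℂ) * Complex.I))
        = ((cab a b : ℝ) : ℂ) * (((1 / (2 * π) : ℝ)) : ℂ)
          * ∫ t in (0:ℝ)..(2*π), KK a b r (t - x) * g t := by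
    intro g x
    rw [Pab, Kint]
    have he : (fun t : ℝ => Kab a b (((r:ℂ) * Complex.exp ((x:ℂ) * Complex.I))
        * Complex.exp (-(t:ℂ) * Complex.I)) * g t)
        = fun t => KK a b r (t - x) * g t := by
      funext t; rw [Kab_eq hr0 hr1]
    rw [he, mul_assoc]
  have hfun : (fun t : ℝ => Pab a b f ((r : ℂ) * Complex.exp ((t : ℂ) * Complex.I)))
      = fun x : ℝ => ((cab a b : ℝ) : ℂ) * (((1 / (2 * π) : ℝ)) : ℂ)
        * ∫ t in (0:ℝ)..(2*π), KK a b r (t - x) * f t :=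
    funext fun x => hrepr f x
  rw [hfun, hrepr fdot θ]
  have hD := main.const_mul (((cab a b : ℝ) : ℂ) * (((1 / (2 * π) : ℝ)) : ℂ))
  rw [mul_assoc] at hD ⊢
  rw [hD.deriv]
  congr 1
  congr 1
  have he2 : (fun t => -(KKd a b r (t - θ)) * f t)
      = fun t => -(KKd a b r (t - θ) * f t) := by funext t; ring
  rw [he2, intervalIntegral.integral_neg, key, neg_neg]
end
end
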